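/- arXiv:1704.06433 — 10 statements merged into one kernel-verified Lean document; each statement's English description precedes it below -/
import Mathlib

section
/- Let h : ℝ → ℝ be continuous, let H : ℝ → ℝ be an antiderivative of h, let s : ℝ → ℝ be an antiderivative of x ↦ exp(H(x)/2), and let G : ℝ → ℝ be twice differentiable with G''(t) = 6·G(t)² for all t. Define F : ℝ → ℝ by F(x) = exp(H(x))·G(s(x)). Then F is twice differentiable and satisfies, for all x, the ODE −3·F(x)·h(x)² + 5·h(x)·F'(x) + 2·F(x)·h'(x) + 12·F(x)² − 2·F''(x) = 0. -/
/-- If `H` is an antiderivative of a continuous (and differentiable) `h`,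
`s` is an antiderivative of `x ↦ exp(H x / 2)`, and `G` is twice differentiable with
`G'' = 6 G²`, then `F x = exp (H x) * G (s x)` is twice differentiable and satisfies
`−3 F h² + 5 h F' + 2 F h' + 12 F² − 2 F'' = 0`. -/
theorem nearHorizon_EW_degenerate_ODE
    (h H s G : ℝ → ℝ)
    (hh_cont : Continuous h)
    (hh_diff : Differentiable ℝ h)
    (hH : ∀ x, HasDerivAt H (h x) x)
    (hs : ∀ x, HasDerivAt s (Real.exp (H x / 2)) x)
    (hG : Differentiable ℝ G)
    (hG' : Differentiable ℝ (deriv G))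
    (hGode : ∀ t, deriv (deriv G) t = 6 * (G t) ^ 2)
    (F : ℝ → ℝ)
    (hF : ∀ x, F x = Real.exp (H x) * G (s x)) :
    (Differentiable ℝ F ∧ Differentiable ℝ (deriv F)) ∧
      ∀ x,
        -3 * F x * (h x) ^ 2 + 5 * h x * deriv F x + 2 * F x * deriv h x
            + 12 * (F x) ^ 2 - 2 * deriv (deriv F) x = 0 := by
  have hFeq : F = fun x => Real.exp (H x) * G (s x) := funext hF
  set F1 : ℝ → ℝ := fun x =>
    h x * F x + Real.exp (3 * H x / 2) * deriv G (s x) with hF1def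
  have hexp32 : ∀ x : ℝ, Real.exp (3 * H x / 2)
      = Real.exp (H x) * Real.exp (H x / 2) := by
    intro x; rw [← Real.exp_add]; ring_nf
  have hd1 : ∀ x, HasDerivAt F (F1 x) x := by
    intro x
    have h1 : HasDerivAt (fun x => Real.exp (H x)) (Real.exp (H x) * h x) x :=
      (hH x).exp
    have h2 : HasDerivAt (fun x => G (s x)) (deriv G (s x) * Real.exp (H x / 2)) x :=
      ((hG (s x)).hasDerivAt).comp x (hs x)
    have h3 := h1.mul h2
    rw [hFeq]
    convert h3 using 1
    · rfl
    · rfl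
    · rfl
    rw [hF1def]
    simp only [hF x, hexp32 x]
    ring
  have hderivF : deriv F = F1 := funext fun x => (hd1 x).deriv
  set F2 : ℝ → ℝ := fun x =>
    deriv h x * F x + h x * F1 x
      + (Real.exp (3 * H x / 2) * (3 * h x / 2)) * deriv G (s x)
      + Real.exp (3 * H x / 2) * (6 * (G (s x)) ^ 2 * Real.exp (H x / 2)) with hF2def
  have hd2 : ∀ x, HasDerivAt F1 (F2 x) x := by
    intro x
    have hA : HasDerivAt (fun x => h x * F x)
        (deriv h x * F x + h x * F1 x) x :=
      ((hh_diff x).hasDerivAt).mul (hd1 x)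
    have hb1 : HasDerivAt (fun x => Real.exp (3 * H x / 2))
        (Real.exp (3 * H x / 2) * (3 * h x / 2)) x := by
      have : HasDerivAt (fun x => 3 * H x / 2) (3 * h x / 2) x :=
        ((hH x).const_mul 3).div_const 2
      exact this.exp
    have hb2 : HasDerivAt (fun x => deriv G (s x))
        (deriv (deriv G) (s x) * Real.exp (H x / 2)) x :=
      ((hG' (s x)).hasDerivAt).comp x (hs x)
    have hB := hb1.mul hb2
    have := hA.add hB
    convert this using 1
    · rfl
    · rfl
    · rfl
    rw [hF2def]
    simp only [hGode (s x)]
    ring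
  have hderivF1 : deriv F1 = F2 := funext fun x => (hd2 x).deriv
  refine ⟨⟨fun x => (hd1 x).differentiableAt, ?_⟩, ?_⟩
  · rw [hderivF]; exact fun x => (hd2 x).differentiableAt
  · intro x
    rw [hderivF, hderivF1, hF2def, hF1def]
    have hE2 : Real.exp (3 * H x / 2) * Real.exp (H x / 2)
        = Real.exp (H x) * Real.exp (H x) := by
      rw [← Real.exp_add, ← Real.exp_add]; ring_nf
    simp only [hF x]
    nlinarith [hE2, hexp32 x, sq_nonneg (G (s x))]
end

section
/- Let F : ℝ → ℝ be twice differentiable with F''(x) = 6·F(x)² for all x, and define u : ℝ³ → ℝ by u(x, ν, r) = −(r²/2)·F(x). Then u satisfies the dispersionless Kadomtsev–Petviashvili (dKP) equation: for all (x, ν, r), 2·∂r(∂ν u − u·∂r u)(x, ν, r) = ∂x∂x u(x, ν, r). -/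
/-- If `F'' = 6 F²`, then `u (x, ν, r) = −(r²/2) F x` satisfies the
dispersionless KP equation `2 (u_ν − u u_r)_r = u_{xx}`. -/
theorem nearHorizon_dKP
    (F : ℝ → ℝ)
    (hF : Differentiable ℝ F)
    (hF' : Differentiable ℝ (deriv F))
    (hFode : ∀ x, deriv (deriv F) x = 6 * (F x) ^ 2)
    (u : ℝ → ℝ → ℝ → ℝ)
    (hu : ∀ x ν r, u x ν r = -(r ^ 2 / 2) * F x) :
    ∀ x ν r,
      2 * deriv (fun r' : ℝ =>
          deriv (fun ν' : ℝ => u x ν' r') ν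
            - u x ν r' * deriv (fun r'' : ℝ => u x ν r'') r') r
        = deriv (deriv (fun x' : ℝ => u x' ν r)) x := by
  intro x ν r
  -- the r-derivative of u in r''
  have hdr : ∀ r' : ℝ, deriv (fun r'' : ℝ => u x ν r'') r' = -(r' * F x) := by
    intro r'
    have h1 : (fun r'' : ℝ => u x ν r'') = fun r'' : ℝ => (-(F x) / 2) * r'' ^ 2 := by
      funext t; rw [hu]; ring
    rw [h1, deriv_const_mul _ (differentiable_pow 2).differentiableAt, deriv_pow_field]
    ring
  have key : (fun r' : ℝ =>
      deriv (fun ν' : ℝ => u x ν' r') ν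
        - u x ν r' * deriv (fun r'' : ℝ => u x ν r'') r')
      = fun r' : ℝ => (-(F x ^ 2) / 2) * r' ^ 3 := by
    funext r'
    have h2 : (fun ν' : ℝ => u x ν' r') = fun _ : ℝ => -(r' ^ 2 / 2) * F x := by
      funext t; rw [hu]
    rw [h2, deriv_const, hdr r', hu]
    ring
  rw [key, deriv_const_mul _ (differentiable_pow 3).differentiableAt, deriv_pow_field]
  -- RHS
  have hx : (fun x' : ℝ => u x' ν r) = fun x' : ℝ => (-(r ^ 2) / 2) * F x' := by
    funext t; rw [hu]; ring
  have hdx : deriv (fun x' : ℝ => u x' ν r) = fun x' : ℝ => (-(r ^ 2) / 2) * deriv F x' := by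
    funext t
    rw [hx, deriv_const_mul _ (hF t)]
  rw [hdx, deriv_const_mul _ (hF' x), hFode]
  ring
end

section
/- Fix real constants α, β, c, and let h : ℝ → ℝ be four times differentiable satisfying h''(x) = α·h(x)·h'(x) + β·h(x)³ for all x. Then for all x, the fourth-order expression E_c(h)(x) := h³(h')²(c−1)² − ½(c−1)²h⁴h'' + (9/4)(c−1)h²h'h'' − (3/4)(c−1)h³h''' − ½(h')²h'' + ½hh'h''' + h(h'')² − ¼h²h'''' (all evaluated at x) equals −(h(x)³/4)·(2(c−1)² + 3α(c−1) + α² − β)·(β·h(x)⁴ + α·h(x)²·h'(x) − 2·h'(x)²). -/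
/-- For a solution `h` of `h'' = α h h' + β h³`, the fourth-order
expression `E_c(h)` collapses to
`−(h³/4)(2(c−1)² + 3α(c−1) + α² − β)(β h⁴ + α h² h' − 2 (h')²)`. -/
theorem fourthOrder_expression_reduction
    (α β c : ℝ) (h : ℝ → ℝ)
    (hd1 : Differentiable ℝ h)
    (hd2 : Differentiable ℝ (deriv h))
    (hd3 : Differentiable ℝ (deriv (deriv h)))
    (hd4 : Differentiable ℝ (deriv (deriv (deriv h))))
    (hode : ∀ x, deriv (deriv h) x = α * h x * deriv h x + β * (h x) ^ 3) :
    ∀ x,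
      (h x) ^ 3 * (deriv h x) ^ 2 * (c - 1) ^ 2
        - (1 / 2) * (c - 1) ^ 2 * (h x) ^ 4 * deriv (deriv h) x
        + (9 / 4) * (c - 1) * (h x) ^ 2 * deriv h x * deriv (deriv h) x
        - (3 / 4) * (c - 1) * (h x) ^ 3 * deriv (deriv (deriv h)) x
        - (1 / 2) * (deriv h x) ^ 2 * deriv (deriv h) x
        + (1 / 2) * h x * deriv h x * deriv (deriv (deriv h)) x
        + h x * (deriv (deriv h) x) ^ 2
        - (1 / 4) * (h x) ^ 2 * deriv (deriv (deriv (deriv h))) x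
      = -((h x) ^ 3 / 4) * (2 * (c - 1) ^ 2 + 3 * α * (c - 1) + α ^ 2 - β)
          * (β * (h x) ^ 4 + α * (h x) ^ 2 * deriv h x - 2 * (deriv h x) ^ 2) := by
  have hfun : deriv (deriv h) = fun x => α * h x * deriv h x + β * (h x) ^ 3 :=
    funext hode
  have h3 : ∀ x, deriv (deriv (deriv h)) x
      = α * (deriv h x) ^ 2 + α * h x * deriv (deriv h) x + 3 * β * (h x) ^ 2 * deriv h x := by
    intro x
    have h1 : HasDerivAt h (deriv h x) x := (hd1 x).hasDerivAt
    have h2 : HasDerivAt (deriv h) (deriv (deriv h) x) x := (hd2 x).hasDerivAt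
    have key : HasDerivAt (fun x => α * h x * deriv h x + β * (h x) ^ 3)
        (α * (deriv h x) ^ 2 + α * h x * deriv (deriv h) x + 3 * β * (h x) ^ 2 * deriv h x) x := by
      have := ((h1.const_mul α).mul h2).add ((h1.pow 3).const_mul β)
      convert this using 1
      · rfl
      · rfl
      · rfl
      push_cast
      ring
    conv_lhs => rw [hfun]
    exact key.deriv
  have h3fun : deriv (deriv (deriv h)) = fun x =>
      α * (deriv h x) ^ 2 + α * h x * deriv (deriv h) x + 3 * β * (h x) ^ 2 * deriv h x :=
    funext h3
  have h4 : ∀ x, deriv (deriv (deriv (deriv h))) x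
      = 3 * α * deriv h x * deriv (deriv h) x + α * h x * deriv (deriv (deriv h)) x
        + 6 * β * h x * (deriv h x) ^ 2 + 3 * β * (h x) ^ 2 * deriv (deriv h) x := by
    intro x
    have h1 : HasDerivAt h (deriv h x) x := (hd1 x).hasDerivAt
    have h2 : HasDerivAt (deriv h) (deriv (deriv h) x) x := (hd2 x).hasDerivAt
    have h3' : HasDerivAt (deriv (deriv h)) (deriv (deriv (deriv h)) x) x := (hd3 x).hasDerivAt
    have key : HasDerivAt (fun x =>
        α * (deriv h x) ^ 2 + α * h x * deriv (deriv h) x + 3 * β * (h x) ^ 2 * deriv h x)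
        (3 * α * deriv h x * deriv (deriv h) x + α * h x * deriv (deriv (deriv h)) x
          + 6 * β * h x * (deriv h x) ^ 2 + 3 * β * (h x) ^ 2 * deriv (deriv h) x) x := by
      have := (((h2.pow 2).const_mul α).add
        (((h1.const_mul α).mul h3').add (((h1.pow 2).const_mul (3 * β)).mul h2)))
      convert this using 1
      · rfl
      · rfl
      · funext y; simp only [Pi.add_apply, Pi.mul_apply, Pi.pow_apply]; ring
      · push_cast; simp only [Pi.pow_apply]; ring
    conv_lhs => rw [h3fun]
    exact key.deriv
  intro x
  rw [h4 x, h3 x, hode x]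
  ring
end

section
/- Fix real constants α, c and set β = 2(c−1)² + 3α(c−1) + α². If h : ℝ → ℝ is four times differentiable and satisfies h''(x) = α·h(x)·h'(x) + β·h(x)³ for all x, then h satisfies the fourth-order ODE (★): for all x, h³(h')²(c−1)² − ½(c−1)²h⁴h'' + (9/4)(c−1)h²h'h'' − (3/4)(c−1)h³h''' − ½(h')²h'' + ½hh'h''' + h(h'')² − ¼h²h'''' = 0. -/
/-- With `β = 2(c−1)² + 3α(c−1) + α²`, every solution of
`h'' = α h h' + β h³` satisfies the fourth-order ODE (★). -/
theorem secondOrder_solves_fourthOrder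
    (α c β : ℝ) (hβ : β = 2 * (c - 1) ^ 2 + 3 * α * (c - 1) + α ^ 2)
    (h : ℝ → ℝ)
    (hd1 : Differentiable ℝ h)
    (hd2 : Differentiable ℝ (deriv h))
    (hd3 : Differentiable ℝ (deriv (deriv h)))
    (hd4 : Differentiable ℝ (deriv (deriv (deriv h))))
    (hode : ∀ x, deriv (deriv h) x = α * h x * deriv h x + β * (h x) ^ 3) :
    ∀ x,
      (h x) ^ 3 * (deriv h x) ^ 2 * (c - 1) ^ 2
        - (1 / 2) * (c - 1) ^ 2 * (h x) ^ 4 * deriv (deriv h) x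
        + (9 / 4) * (c - 1) * (h x) ^ 2 * deriv h x * deriv (deriv h) x
        - (3 / 4) * (c - 1) * (h x) ^ 3 * deriv (deriv (deriv h)) x
        - (1 / 2) * (deriv h x) ^ 2 * deriv (deriv h) x
        + (1 / 2) * h x * deriv h x * deriv (deriv (deriv h)) x
        + h x * (deriv (deriv h) x) ^ 2
        - (1 / 4) * (h x) ^ 2 * deriv (deriv (deriv (deriv h))) x = 0 := by
  have e2 : deriv (deriv h) = fun x => α * h x * deriv h x + β * (h x) ^ 3 :=
    funext hode
  have H3 : ∀ x, HasDerivAt (deriv (deriv h))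
      (α * deriv h x * deriv h x + α * h x * deriv (deriv h) x
        + β * (3 * (h x) ^ 2 * deriv h x)) x := by
    intro x
    have dh : HasDerivAt h (deriv h x) x := (hd1 x).hasDerivAt
    have dh' : HasDerivAt (deriv h) (deriv (deriv h) x) x := (hd2 x).hasDerivAt
    have t1 : HasDerivAt (fun x => α * h x * deriv h x)
        (α * deriv h x * deriv h x + α * h x * deriv (deriv h) x) x :=
      (dh.const_mul α).mul dh'
    have t2 : HasDerivAt (fun x => β * (h x) ^ 3)
        (β * (3 * (h x) ^ 2 * deriv h x)) x := by
      have := dh.pow 3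
      simpa using this.const_mul β
    exact (t1.add t2).congr_of_eventuallyEq
      (Filter.Eventually.of_forall fun y => hode y)
  have h3 : ∀ x, deriv (deriv (deriv h)) x
      = α * deriv h x * deriv h x + α * h x * deriv (deriv h) x
        + β * (3 * (h x) ^ 2 * deriv h x) := fun x => (H3 x).deriv
  have e3 : deriv (deriv (deriv h)) = fun x =>
      α * deriv h x * deriv h x + α * h x * deriv (deriv h) x
        + β * (3 * (h x) ^ 2 * deriv h x) := funext h3
  have h4 : ∀ x, deriv (deriv (deriv (deriv h))) x
      = (α * deriv (deriv h) x * deriv h x + α * deriv h x * deriv (deriv h) x)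
        + (α * deriv h x * deriv (deriv h) x + α * h x * deriv (deriv (deriv h)) x)
        + β * (3 * (2 * h x * deriv h x) * deriv h x
              + 3 * (h x) ^ 2 * deriv (deriv h) x) := by
    intro x
    have dh : HasDerivAt h (deriv h x) x := (hd1 x).hasDerivAt
    have dh' : HasDerivAt (deriv h) (deriv (deriv h) x) x := (hd2 x).hasDerivAt
    have dh'' : HasDerivAt (deriv (deriv h)) (deriv (deriv (deriv h)) x) x :=
      (hd3 x).hasDerivAt
    have t1 : HasDerivAt (fun x => α * deriv h x * deriv h x)
        (α * deriv (deriv h) x * deriv h x + α * deriv h x * deriv (deriv h) x) x :=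
      (dh'.const_mul α).mul dh'
    have t2 : HasDerivAt (fun x => α * h x * deriv (deriv h) x)
        (α * deriv h x * deriv (deriv h) x + α * h x * deriv (deriv (deriv h)) x) x :=
      (dh.const_mul α).mul dh''
    have t3 : HasDerivAt (fun x => β * (3 * (h x) ^ 2 * deriv h x))
        (β * (3 * (2 * h x * deriv h x) * deriv h x
              + 3 * (h x) ^ 2 * deriv (deriv h) x)) x := by
      have hp : HasDerivAt (fun x => (h x) ^ 2) (2 * h x * deriv h x) x := by
        simpa [mul_comm] using dh.fun_pow 2
      have := ((hp.const_mul (3:ℝ)).mul dh').const_mul β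
      exact this.congr_deriv (by ring)
    have := ((t1.add t2).add t3).congr_of_eventuallyEq
      (Filter.Eventually.of_forall fun y => h3 y)
    exact this.deriv
  intro x
  rw [h4 x, h3 x, hode x]
  subst hβ
  ring
end

section
/- Fix real constants α, β. Let J ⊆ ℝ be an open interval with 0 ∉ J, and let x : J → ℝ be twice differentiable satisfying x''(s) = −β·s³·x'(s)³ − α·s·x'(s)² for all s ∈ J. Define y : J → ℝ by y(s) = s²·x'(s). Then y satisfies the Abel differential equation of the first kind: for all s ∈ J, y'(s) = (1/s)·(−β·y(s)³ − α·y(s)² + 2·y(s)). -/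
/-- If `x'' = −β s³ (x')³ − α s (x')²` on an open interval `J` avoiding `0`,
then `y s = s² x' s` satisfies the Abel equation `y' = (1/s)(−β y³ − α y² + 2 y)`. -/
theorem dualODE_to_Abel
    (α β : ℝ) (J : Set ℝ)
    (hJopen : IsOpen J) (hJconn : J.OrdConnected) (hJ0 : (0 : ℝ) ∉ J)
    (x : ℝ → ℝ)
    (xd1 : ∀ s ∈ J, DifferentiableAt ℝ x s)
    (xd2 : ∀ s ∈ J, DifferentiableAt ℝ (deriv x) s)
    (xode : ∀ s ∈ J, deriv (deriv x) s = -β * s ^ 3 * (deriv x s) ^ 3 - α * s * (deriv x s) ^ 2)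
    (y : ℝ → ℝ)
    (hy : ∀ s, y s = s ^ 2 * deriv x s) :
    ∀ s ∈ J,
      deriv y s = (1 / s) * (-β * (y s) ^ 3 - α * (y s) ^ 2 + 2 * y s) := by
  intro s hs
  have hs0 : s ≠ 0 := fun h => hJ0 (h ▸ hs)
  have hyfun : y = fun t => t ^ 2 * deriv x t := funext hy
  have hsq : DifferentiableAt ℝ (fun t : ℝ => t ^ 2) s := by fun_prop
  have hdy : deriv y s = 2 * s * deriv x s + s ^ 2 * deriv (deriv x) s := by
    rw [hyfun, deriv_fun_mul hsq (xd2 s hs)]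
    simp [deriv_pow_field]
  rw [hdy, xode s hs, hy s]
  field_simp
  ring
end

section
/- Fix real constants α, β, γ with γ ≠ 0, and let J ⊆ ℝ be an open interval on which y > 0, β·y² + α·y − 2 > 0, α² + 8β > 0, and (2βy + α)² < α² + 8β. Define h : J → ℝ by h(y) = γ·√y·exp( (α/(2√(α²+8β)))·artanh((2βy + α)/√(α²+8β)) ) / (βy² + αy − 2)^{1/4}. Then h is differentiable on J and satisfies, for all y ∈ J, h'(y)·(2y − α·y² − β·y³) = h(y). -/
/-- The real inverse hyperbolic tangent. -/
noncomputable def artanh (x : ℝ) : ℝ := (1 / 2) * Real.log ((1 + x) / (1 - x))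

/-- The explicit function
`h(y) = γ √y exp((α/(2√(α²+8β))) artanh((2βy+α)/√(α²+8β))) / (βy²+αy−2)^{1/4}`
solves the Abel equation in the form `h'(y)(2y − αy² − βy³) = h(y)`. -/
theorem Abel_explicit_solution
    (α β γ : ℝ) (hγ : γ ≠ 0)
    (J : Set ℝ) (hJopen : IsOpen J) (hJconn : J.OrdConnected)
    (hpos : ∀ y ∈ J, 0 < y)
    (hquad : ∀ y ∈ J, 0 < β * y ^ 2 + α * y - 2)
    (hdisc : 0 < α ^ 2 + 8 * β)
    (hrange : ∀ y ∈ J, (2 * β * y + α) ^ 2 < α ^ 2 + 8 * β)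
    (h : ℝ → ℝ)
    (hdef : ∀ y, h y =
      γ * Real.sqrt y *
        Real.exp ((α / (2 * Real.sqrt (α ^ 2 + 8 * β))) *
          artanh ((2 * β * y + α) / Real.sqrt (α ^ 2 + 8 * β))) /
        (β * y ^ 2 + α * y - 2) ^ ((1 : ℝ) / 4)) :
    ∀ y ∈ J,
      DifferentiableAt ℝ h y ∧
        deriv h y * (2 * y - α * y ^ 2 - β * y ^ 3) = h y := by
  intro y hy
  have hy0 : 0 < y := hpos y hy
  have hq0 : 0 < β * y ^ 2 + α * y - 2 := hquad y hy
  have hs0 : 0 < Real.sqrt (α ^ 2 + 8 * β) := Real.sqrt_pos.2 hdisc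
  set s := Real.sqrt (α ^ 2 + 8 * β) with hs_def
  have hs2 : s * s = α ^ 2 + 8 * β := Real.mul_self_sqrt hdisc.le
  have hβ : β ≠ 0 := by
    rintro rfl
    have := hrange y hy
    nlinarith
  have hwlt : ∀ t ∈ J, -s < 2 * β * t + α ∧ 2 * β * t + α < s := by
    intro t ht
    have h1 := hrange t ht
    constructor <;> nlinarith [hs2, hs0]
  have h1p : ∀ t ∈ J, 0 < 1 + (2 * β * t + α) / s := by
    intro t ht
    have h1 := (hwlt t ht).1
    have h2 : (-1 : ℝ) < (2 * β * t + α) / s := by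
      rw [lt_div_iff₀ hs0]; linarith
    linarith
  have h2p : ∀ t ∈ J, 0 < 1 - (2 * β * t + α) / s := by
    intro t ht
    have h1 := (hwlt t ht).2
    have h2 : (2 * β * t + α) / s < 1 := by
      rw [div_lt_iff₀ hs0]; linarith
    linarith
  have hv : HasDerivAt (fun t => (2 * β * t + α) / s) (2 * β / s) y := by
    have h1 : HasDerivAt (fun t : ℝ => 2 * β * t + α) (2 * β) y := by
      simpa using ((hasDerivAt_id y).const_mul (2 * β)).add_const α
    exact h1.div_const s
  have hlog1 : HasDerivAt (fun t => Real.log (1 + (2 * β * t + α) / s))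
      ((2 * β / s) / (1 + (2 * β * y + α) / s)) y :=
    (hv.const_add 1).log (h1p y hy).ne'
  have hlog2 : HasDerivAt (fun t => Real.log (1 - (2 * β * t + α) / s))
      ((-(2 * β / s)) / (1 - (2 * β * y + α) / s)) y :=
    (hv.const_sub 1).log (h2p y hy).ne'
  set c := α / (2 * s) with hc
  set G := (1/2 : ℝ) * ((2 * β / s) / (1 + (2 * β * y + α) / s)
      - (-(2 * β / s)) / (1 - (2 * β * y + α) / s)) with hG
  have hg : HasDerivAt (fun t => artanh ((2 * β * t + α) / s)) G y := by
    have h0 : HasDerivAt (fun t => (1/2 : ℝ) * (Real.log (1 + (2 * β * t + α) / s)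
        - Real.log (1 - (2 * β * t + α) / s))) G y := (hlog1.sub hlog2).const_mul (1/2)
    refine h0.congr_of_eventuallyEq ?_
    filter_upwards [hJopen.mem_nhds hy] with t ht
    rw [artanh, Real.log_div (h1p t ht).ne' (h2p t ht).ne']
  have hexp : HasDerivAt (fun t => Real.exp (c * artanh ((2 * β * t + α) / s)))
      (Real.exp (c * artanh ((2 * β * y + α) / s)) * (c * G)) y := (hg.const_mul c).exp
  have hsqrt : HasDerivAt (fun t => γ * Real.sqrt t) (γ * (1 / (2 * Real.sqrt y))) y :=
    (Real.hasDerivAt_sqrt hy0.ne').const_mul γ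
  have hnum := hsqrt.mul hexp
  have hQ : HasDerivAt (fun t => β * t ^ 2 + α * t - 2) (2 * β * y + α) y := by
    have h1 : HasDerivAt (fun t : ℝ => β * t ^ 2 + α * t - 2)
        (β * ((2:ℕ) * y ^ 1) + α * 1) y :=
      (((hasDerivAt_pow 2 y).const_mul β).add ((hasDerivAt_id y).const_mul α)).sub_const 2
    convert h1 using 1
    push_cast; ring
  have hden : HasDerivAt (fun t => (β * t ^ 2 + α * t - 2) ^ ((1:ℝ)/4))
      ((2 * β * y + α) * ((1:ℝ)/4) * (β * y ^ 2 + α * y - 2) ^ ((1:ℝ)/4 - 1)) y :=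
    hQ.rpow_const (Or.inl hq0.ne')
  have hr4 : 0 < (β * y ^ 2 + α * y - 2) ^ ((1:ℝ)/4) := Real.rpow_pos_of_pos hq0 _
  have hH := hnum.div hden hr4.ne'
  have hfun : h = fun t => γ * Real.sqrt t *
      Real.exp (c * artanh ((2 * β * t + α) / s)) /
      (β * t ^ 2 + α * t - 2) ^ ((1 : ℝ) / 4) := funext hdef
  rw [hfun]
  refine ⟨hH.differentiableAt, ?_⟩
  rw [(show HasDerivAt (fun t => γ * Real.sqrt t * Real.exp (c * artanh ((2 * β * t + α) / s)) /
      (β * t ^ 2 + α * t - 2) ^ ((1 : ℝ) / 4)) _ y from hH).deriv]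
  set S := Real.sqrt y with hS
  set E := Real.exp (c * artanh ((2 * β * y + α) / s)) with hE
  set q4 := (β * y ^ 2 + α * y - 2) ^ ((1:ℝ)/4) with hq4
  set q4' := (β * y ^ 2 + α * y - 2) ^ ((1:ℝ)/4 - 1) with hq4'
  show _ = γ * S * E / q4
  have hSy : S * S = y := Real.mul_self_sqrt hy0.le
  have hw1 : 0 < s + (2 * β * y + α) := by have := (hwlt y hy).1; linarith
  have hw2 : 0 < s - (2 * β * y + α) := by have := (hwlt y hy).2; linarith
  have hprod : (s - (2 * β * y + α)) * (s + (2 * β * y + α))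
      = -4 * β * (β * y ^ 2 + α * y - 2) := by linear_combination hs2
  have hcG : c * G = -α / (4 * (β * y ^ 2 + α * y - 2)) := by
    rw [hc, hG]
    have h1 := (h1p y hy).ne'
    have h2 := (h2p y hy).ne'
    generalize hQ : β * y ^ 2 + α * y - 2 = Q at ⊢
    have hQne : Q ≠ 0 := hQ ▸ hq0.ne'
    field_simp
    linear_combination (2*α*s) * hprod - (8*α*β*s) * hQ
  have hq4'q : q4' * (β * y ^ 2 + α * y - 2) = q4 := by
    rw [hq4', hq4, ← Real.rpow_add_one hq0.ne']
    norm_num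
  rw [hcG]
  have hq4ne := hr4.ne'
  have hSne : S ≠ 0 := by positivity
  simp only [Pi.mul_apply, ← hS, ← hE]
  have hQne := hq0.ne'
  generalize hQ : β * y ^ 2 + α * y - 2 = Q at hQne hq4'q ⊢
  field_simp
  rw [show S ^ 2 = y by rw [sq]; exact hSy]
  subst hQ
  linear_combination (E*y*(2-α*y-β*y^2)*(-2*y*(2*β*y+α))) * hq4'q
end

section
/- Fix real constants α, β, γ with γ ≠ 0, and let J ⊆ ℝ be an open interval on which y > 0, β·y² + α·y − 2 > 0, α² + 8β > 0, and (2βy + α)² < α² + 8β. Define A(y) = (α/(2√(α²+8β)))·artanh((2βy + α)/√(α²+8β)), h(y) = γ·√y·exp(A(y))/(βy² + αy − 2)^{1/4}, and let x : J → ℝ be any differentiable function with x'(y) = −(1/γ)·exp(−A(y))/(√y·(βy² + αy − 2)^{3/4}) for all y ∈ J. Then for all y ∈ J, h(y)²·x'(y) = y·h'(y). -/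
/-- With `A(y) = (α/(2√(α²+8β))) artanh((2βy+α)/√(α²+8β))`,
`h(y) = γ √y e^{A(y)} / (βy²+αy−2)^{1/4}` and `x` any antiderivative of
`−(1/γ) e^{−A(y)} / (√y (βy²+αy−2)^{3/4})`, one has `h² x' = y h'` on `J`. -/
theorem parametric_solution_consistency
    (α β γ : ℝ) (hγ : γ ≠ 0)
    (J : Set ℝ) (hJopen : IsOpen J) (hJconn : J.OrdConnected)
    (hpos : ∀ y ∈ J, 0 < y)
    (hquad : ∀ y ∈ J, 0 < β * y ^ 2 + α * y - 2)
    (hdisc : 0 < α ^ 2 + 8 * β)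
    (hrange : ∀ y ∈ J, (2 * β * y + α) ^ 2 < α ^ 2 + 8 * β)
    (A h : ℝ → ℝ)
    (hA : ∀ y, A y = (α / (2 * Real.sqrt (α ^ 2 + 8 * β))) *
        artanh ((2 * β * y + α) / Real.sqrt (α ^ 2 + 8 * β)))
    (hdef : ∀ y, h y =
      γ * Real.sqrt y * Real.exp (A y) /
        (β * y ^ 2 + α * y - 2) ^ ((1 : ℝ) / 4))
    (x : ℝ → ℝ)
    (hx : ∀ y ∈ J, HasDerivAt x
      (-(1 / γ) * Real.exp (-(A y)) /
        (Real.sqrt y * (β * y ^ 2 + α * y - 2) ^ ((3 : ℝ) / 4))) y) :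
    ∀ y ∈ J, (h y) ^ 2 * deriv x y = y * deriv h y := by
  intro y hy
  have hy0 : 0 < y := hpos y hy
  have hQ : 0 < β * y ^ 2 + α * y - 2 := hquad y hy
  have hs0 : 0 < Real.sqrt (α ^ 2 + 8 * β) := Real.sqrt_pos.mpr hdisc
  set s : ℝ := Real.sqrt (α ^ 2 + 8 * β) with hs_def
  have hs2 : s ^ 2 = α ^ 2 + 8 * β := Real.sq_sqrt hdisc.le
  have hbQ : 0 < (-4 * β) * (β * y ^ 2 + α * y - 2) := by
    have e : (-4 * β) * (β * y ^ 2 + α * y - 2)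
        = α ^ 2 + 8 * β - (2 * β * y + α) ^ 2 := by ring
    rw [e]; linarith [hrange y hy]
  have hβ : β ≠ 0 := by
    intro hb
    rw [hb] at hbQ; nlinarith
  have key : ∀ t ∈ J, 0 < 1 + (2 * β * t + α) / s ∧ 0 < 1 - (2 * β * t + α) / s := by
    intro t ht
    have hu2 : ((2 * β * t + α) / s) ^ 2 < 1 := by
      rw [div_pow, div_lt_one (by positivity), hs2]
      exact hrange t ht
    constructor <;> nlinarith [hu2]
  have hAeq : A =ᶠ[nhds y] (fun t => (α / (2 * s)) * ((1 / 2) *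
      (Real.log (1 + (2 * β * t + α) / s) - Real.log (1 - (2 * β * t + α) / s)))) := by
    filter_upwards [hJopen.mem_nhds hy] with t ht
    obtain ⟨h1p, h1m⟩ := key t ht
    rw [hA t, artanh, Real.log_div h1p.ne' h1m.ne']
  have hwd : HasDerivAt (fun t : ℝ => (2 * β * t + α) / s) (2 * β / s) y := by
    have : HasDerivAt (fun t : ℝ => 2 * β * t + α) (2 * β) y := by
      simpa using ((hasDerivAt_id y).const_mul (2 * β)).add_const α
    exact this.div_const s
  obtain ⟨h1p, h1m⟩ := key y hy
  have h1pd : HasDerivAt (fun t : ℝ => 1 + (2 * β * t + α) / s) (2 * β / s) y :=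
    hwd.const_add 1
  have h1md : HasDerivAt (fun t : ℝ => 1 - (2 * β * t + α) / s) (-(2 * β / s)) y :=
    hwd.const_sub 1
  have hlog1 := h1pd.log h1p.ne'
  have hlog2 := h1md.log h1m.ne'
  have hsw : s ^ 2 - (2 * β * y + α) ^ 2 = (-4 * β) * (β * y ^ 2 + α * y - 2) := by
    rw [hs2]; ring
  have hAd : HasDerivAt A (-α / (4 * (β * y ^ 2 + α * y - 2))) y := by
    have H := (((hlog1.sub hlog2).const_mul ((1:ℝ)/2)).const_mul (α / (2 * s)))
    have H2 := H.congr_of_eventuallyEq hAeq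
    have e : α / (2 * s) * (1 / 2 * (2 * β / s / (1 + (2 * β * y + α) / s)
        - -(2 * β / s) / (1 - (2 * β * y + α) / s)))
        = α * β / ((s + (2 * β * y + α)) * (s - (2 * β * y + α))) := by
      have e0 : s * (1 + (2 * β * y + α) / s) = s + (2 * β * y + α) := by
        field_simp
      have e1 : s * (1 - (2 * β * y + α) / s) = s - (2 * β * y + α) := by
        field_simp
      have hsp : (0:ℝ) < s + (2 * β * y + α) := e0 ▸ mul_pos hs0 h1p
      have hsm : (0:ℝ) < s - (2 * β * y + α) := e1 ▸ mul_pos hs0 h1m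
      field_simp [hsp.ne', hsm.ne']
      ring
    have e2 : α * β / ((s + (2 * β * y + α)) * (s - (2 * β * y + α)))
        = -α / (4 * (β * y ^ 2 + α * y - 2)) := by
      rw [show (s + (2 * β * y + α)) * (s - (2 * β * y + α))
          = s ^ 2 - (2 * β * y + α) ^ 2 by ring, hsw]
      field_simp
    rw [e, e2] at H2
    exact H2
  have hQt : HasDerivAt (fun t : ℝ => β * t ^ 2 + α * t - 2) (2 * β * y + α) y := by
    have h1 : HasDerivAt (fun t : ℝ => t ^ 2) (2 * y) y := by
      simpa using hasDerivAt_pow 2 y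
    have := ((h1.const_mul β).add ((hasDerivAt_id y).const_mul α)).sub_const 2
    exact this.congr_deriv (by ring)
  have hq := hQt.rpow_const (p := (1:ℝ)/4) (Or.inl hQ.ne')
  have hsyd : HasDerivAt Real.sqrt (1 / (2 * Real.sqrt y)) y := Real.hasDerivAt_sqrt hy0.ne'
  have hN : HasDerivAt (fun t => γ * Real.sqrt t * Real.exp (A t))
      ((γ * (1 / (2 * Real.sqrt y))) * Real.exp (A y)
        + (γ * Real.sqrt y) * (Real.exp (A y) * (-α / (4 * (β * y ^ 2 + α * y - 2))))) y :=
    (hsyd.const_mul γ).mul hAd.exp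
  have hqne : (β * y ^ 2 + α * y - 2) ^ ((1:ℝ)/4) ≠ 0 := by positivity
  have hfun : h = fun t => γ * Real.sqrt t * Real.exp (A t) /
      (β * t ^ 2 + α * t - 2) ^ ((1:ℝ)/4) := funext hdef
  have hhd : HasDerivAt (fun t => γ * Real.sqrt t * Real.exp (A t) /
      (β * t ^ 2 + α * t - 2) ^ ((1:ℝ)/4)) _ y := hN.div hq hqne
  simp only [hfun]
  rw [(hx y hy).deriv, hhd.deriv]
  have hq4 : ((β * y ^ 2 + α * y - 2) ^ ((1:ℝ)/4)) ^ 4 = β * y ^ 2 + α * y - 2 := by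
    rw [← Real.rpow_natCast ((β * y ^ 2 + α * y - 2) ^ ((1:ℝ)/4)) 4,
        ← Real.rpow_mul hQ.le]
    norm_num
  have h34 : (β * y ^ 2 + α * y - 2) ^ ((3:ℝ)/4)
      = ((β * y ^ 2 + α * y - 2) ^ ((1:ℝ)/4)) ^ 3 := by
    rw [← Real.rpow_natCast ((β * y ^ 2 + α * y - 2) ^ ((1:ℝ)/4)) 3,
        ← Real.rpow_mul hQ.le]
    norm_num
  have hm34 : (β * y ^ 2 + α * y - 2) ^ ((1:ℝ)/4 - 1)
      = 1 / ((β * y ^ 2 + α * y - 2) ^ ((1:ℝ)/4)) ^ 3 := by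
    rw [eq_div_iff (pow_ne_zero 3 hqne), ← h34, ← Real.rpow_add hQ]
    norm_num
  rw [h34, hm34, Real.exp_neg]
  have hsy0 : 0 < Real.sqrt y := Real.sqrt_pos.mpr hy0
  have hsy2 : Real.sqrt y ^ 2 = y := Real.sq_sqrt hy0.le
  set q : ℝ := (β * y ^ 2 + α * y - 2) ^ ((1:ℝ)/4) with hqdef
  set E : ℝ := Real.exp (A y) with hEdef
  set sy : ℝ := Real.sqrt y with hsydef
  have hE0 : E ≠ 0 := Real.exp_ne_zero _
  rw [← hq4, ← hsy2]
  have hrel : q ^ 4 = β * sy ^ 4 + α * sy ^ 2 - 2 := by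
    rw [show sy ^ 4 = (sy ^ 2) ^ 2 by ring, hsy2]; exact hq4
  field_simp
  linear_combination (-4) * hrel
end

section
/- Fix a real constant b. On the set {x : x ≠ b}, the functions h₁(x) = (x − b)² and h₂(x) = 1/(x − b) each satisfy the third-order ODE −¼·h(x)²·h'''(x) + h(x)·h'(x)·h''(x) − ½·h'(x)³ = 0, and each also satisfies the fourth-order ODE (★) with parameter c = 1: h³(h')²(c−1)² − ½(c−1)²h⁴h'' + (9/4)(c−1)h²h'h'' − (3/4)(c−1)h³h''' − ½(h')²h'' + ½hh'h''' + h(h'')² − ¼h²h'''' = 0. -/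
lemma key_deriv (b k : ℝ) (n : ℤ) (f : ℝ → ℝ)
    (H : ∀ y, y ≠ b → f y = k * (y - b) ^ n) :
    ∀ x, x ≠ b → deriv f x = (k * n) * (x - b) ^ (n - 1) := by
  intro x hx
  have hmem : {y : ℝ | y ≠ b} ∈ nhds x := isOpen_ne.mem_nhds hx
  have hev : f =ᶠ[nhds x] fun y => k * (y - b) ^ n := by
    filter_upwards [hmem] with y hy using H y hy
  rw [hev.deriv_eq]
  have h1 : HasDerivAt (fun y : ℝ => y - b) 1 x := (hasDerivAt_id x).sub_const b
  have h2 : HasDerivAt (fun y : ℝ => (y - b) ^ n)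
      (((n : ℝ) * (x - b) ^ (n - 1)) * 1) x :=
    by have := (hasDerivAt_zpow n (x - b) (Or.inl (sub_ne_zero.mpr hx))).comp x h1; exact this
  have h3 := (h2.const_mul k).deriv
  rw [h3]; ring

/-- On `{x ≠ b}`, the functions `h₁(x) = (x−b)²` and `h₂(x) = 1/(x−b)`
satisfy the third-order ODE `−¼ h² h''' + h h' h'' − ½ (h')³ = 0` and the
fourth-order ODE (★) with parameter `c = 1`. -/
theorem further_solutions_c_one
    (b : ℝ) (h₁ h₂ : ℝ → ℝ)
    (hdef₁ : ∀ x, h₁ x = (x - b) ^ 2)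
    (hdef₂ : ∀ x, h₂ x = 1 / (x - b))
    (c : ℝ) (hc : c = 1) :
    ∀ x, x ≠ b →
      (-(1 / 4) * (h₁ x) ^ 2 * deriv (deriv (deriv h₁)) x
          + h₁ x * deriv h₁ x * deriv (deriv h₁) x
          - (1 / 2) * (deriv h₁ x) ^ 3 = 0) ∧
      (-(1 / 4) * (h₂ x) ^ 2 * deriv (deriv (deriv h₂)) x
          + h₂ x * deriv h₂ x * deriv (deriv h₂) x
          - (1 / 2) * (deriv h₂ x) ^ 3 = 0) ∧
      ((h₁ x) ^ 3 * (deriv h₁ x) ^ 2 * (c - 1) ^ 2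
          - (1 / 2) * (c - 1) ^ 2 * (h₁ x) ^ 4 * deriv (deriv h₁) x
          + (9 / 4) * (c - 1) * (h₁ x) ^ 2 * deriv h₁ x * deriv (deriv h₁) x
          - (3 / 4) * (c - 1) * (h₁ x) ^ 3 * deriv (deriv (deriv h₁)) x
          - (1 / 2) * (deriv h₁ x) ^ 2 * deriv (deriv h₁) x
          + (1 / 2) * h₁ x * deriv h₁ x * deriv (deriv (deriv h₁)) x
          + h₁ x * (deriv (deriv h₁) x) ^ 2
          - (1 / 4) * (h₁ x) ^ 2 * deriv (deriv (deriv (deriv h₁))) x = 0) ∧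
      ((h₂ x) ^ 3 * (deriv h₂ x) ^ 2 * (c - 1) ^ 2
          - (1 / 2) * (c - 1) ^ 2 * (h₂ x) ^ 4 * deriv (deriv h₂) x
          + (9 / 4) * (c - 1) * (h₂ x) ^ 2 * deriv h₂ x * deriv (deriv h₂) x
          - (3 / 4) * (c - 1) * (h₂ x) ^ 3 * deriv (deriv (deriv h₂)) x
          - (1 / 2) * (deriv h₂ x) ^ 2 * deriv (deriv h₂) x
          + (1 / 2) * h₂ x * deriv h₂ x * deriv (deriv (deriv h₂)) x
          + h₂ x * (deriv (deriv h₂) x) ^ 2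
          - (1 / 4) * (h₂ x) ^ 2 * deriv (deriv (deriv (deriv h₂))) x = 0) := by
  have A0 : ∀ y, y ≠ b → h₁ y = 1 * (y - b) ^ (2:ℤ) := by
    intro y _; rw [hdef₁, one_mul, show ((2:ℤ)) = ((2:ℕ):ℤ) from rfl, zpow_natCast]
  have A1 := key_deriv b 1 2 h₁ A0
  have A1' : ∀ y, y ≠ b → deriv h₁ y = 2 * (y - b) ^ (1:ℤ) := by
    intro y hy; rw [A1 y hy]; norm_num
  have A2 := key_deriv b 2 1 (deriv h₁) A1'
  have A2' : ∀ y, y ≠ b → deriv (deriv h₁) y = 2 * (y - b) ^ (0:ℤ) := by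
    intro y hy; rw [A2 y hy]; norm_num
  have A3 := key_deriv b 2 0 (deriv (deriv h₁)) A2'
  have A3' : ∀ y, y ≠ b → deriv (deriv (deriv h₁)) y = 0 * (y - b) ^ (0:ℤ) := by
    intro y hy; rw [A3 y hy]; norm_num
  have A4 := key_deriv b 0 0 (deriv (deriv (deriv h₁))) A3'
  have B0 : ∀ y, y ≠ b → h₂ y = 1 * (y - b) ^ (-1:ℤ) := by
    intro y hy; rw [hdef₂, one_mul, zpow_neg, zpow_one, one_div]
  have B1 := key_deriv b 1 (-1) h₂ B0
  have B1' : ∀ y, y ≠ b → deriv h₂ y = (-1) * (y - b) ^ (-2:ℤ) := by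
    intro y hy; rw [B1 y hy]; norm_num
  have B2 := key_deriv b (-1) (-2) (deriv h₂) B1'
  have B2' : ∀ y, y ≠ b → deriv (deriv h₂) y = 2 * (y - b) ^ (-3:ℤ) := by
    intro y hy; rw [B2 y hy]; norm_num
  have B3 := key_deriv b 2 (-3) (deriv (deriv h₂)) B2'
  have B3' : ∀ y, y ≠ b → deriv (deriv (deriv h₂)) y = (-6) * (y - b) ^ (-4:ℤ) := by
    intro y hy; rw [B3 y hy]; norm_num
  have B4 := key_deriv b (-6) (-4) (deriv (deriv (deriv h₂))) B3'
  intro x hx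
  have ht : x - b ≠ 0 := sub_ne_zero.mpr hx
  have znn : ∀ (m : ℕ) (t : ℝ), t ^ (-(m:ℤ)) = (t ^ m)⁻¹ := by
    intro m t; rw [zpow_neg, zpow_natCast]
  have a1 : deriv h₁ x = 2 * (x - b) := by rw [A1' x hx, zpow_one]
  have a2 : deriv (deriv h₁) x = 2 := by rw [A2' x hx, zpow_zero, mul_one]
  have a3 : deriv (deriv (deriv h₁)) x = 0 := by rw [A3' x hx, zero_mul]
  have a4 : deriv (deriv (deriv (deriv h₁))) x = 0 := by
    rw [A4 x hx]; norm_num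
  have b1 : deriv h₂ x = -((x - b) ^ 2)⁻¹ := by
    rw [B1 x hx, show ((-1:ℤ) - 1) = -((2:ℕ):ℤ) from rfl, znn 2]; push_cast; ring
  have b2 : deriv (deriv h₂) x = 2 * ((x - b) ^ 3)⁻¹ := by
    rw [B2 x hx, show ((-2:ℤ) - 1) = -((3:ℕ):ℤ) from rfl, znn 3]; push_cast; ring
  have b3 : deriv (deriv (deriv h₂)) x = -(6 * ((x - b) ^ 4)⁻¹) := by
    rw [B3 x hx, show ((-3:ℤ) - 1) = -((4:ℕ):ℤ) from rfl, znn 4]; push_cast; ring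
  have b4 : deriv (deriv (deriv (deriv h₂))) x = 24 * ((x - b) ^ 5)⁻¹ := by
    rw [B4 x hx, show ((-4:ℤ) - 1) = -((5:ℕ):ℤ) from rfl, znn 5]; push_cast; ring
  rw [hc, hdef₁ x, hdef₂ x, a1, a2, a3, a4, b1, b2, b3, b4]
  refine ⟨by ring, by field_simp; ring, by ring, by field_simp; ring⟩
end

section
/- Fix real constants a, b, e, j, k, l with b ≠ 0, and define H : ℝ³ → ℝ by H(x, ν, r) = j·tanh(w)³ + k·tanh(w) + l, where w = (a²/b)·r + b·ν + a·x + e. Then H satisfies the hyperCR (dispersionless Hirota) equation: for all (x, ν, r), ∂x H·∂r∂r H − ∂r H·∂x∂r H − ∂x∂x H + ∂r∂ν H = 0. -/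
noncomputable def g1' (j k : ℝ) (u : ℝ) : ℝ :=
  (3 * j * Real.tanh u ^ 2 + k) * (1 - Real.tanh u ^ 2)

noncomputable def g2' (j k : ℝ) (u : ℝ) : ℝ :=
  3 * j * (2 * Real.tanh u * ((1 - Real.tanh u ^ 2))) * (1 - Real.tanh u ^ 2)
    + (3 * j * Real.tanh u ^ 2 + k) * (-(2 * Real.tanh u * (1 - Real.tanh u ^ 2)))

lemma hasDerivAt_tanh' (x : ℝ) :
    HasDerivAt Real.tanh (1 - Real.tanh x ^ 2) x := by
  have hc : Real.cosh x ≠ 0 := (Real.cosh_pos x).ne'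
  have h := (Real.hasDerivAt_sinh x).div (Real.hasDerivAt_cosh x) hc
  have hfun : (fun y => Real.sinh y / Real.cosh y) = Real.tanh := by
    funext y; rw [Real.tanh_eq_sinh_div_cosh]
  rw [show (Real.sinh / Real.cosh) = fun y => Real.sinh y / Real.cosh y from rfl, hfun] at h
  refine h.congr_deriv ?_
  have key : Real.cosh x ^ 2 - Real.sinh x ^ 2 = 1 := Real.cosh_sq_sub_sinh_sq x
  rw [Real.tanh_eq_sinh_div_cosh]
  field_simp

lemma hd_f' (j k l : ℝ) {L : ℝ → ℝ} {p x : ℝ} (hL : HasDerivAt L p x) :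
    HasDerivAt (fun s => j * Real.tanh (L s) ^ 3 + k * Real.tanh (L s) + l)
      (g1' j k (L x) * p) x := by
  have ht : HasDerivAt (fun s => Real.tanh (L s)) ((1 - Real.tanh (L x) ^ 2) * p) x :=
    (hasDerivAt_tanh' (L x)).comp x hL
  have h := (((ht.pow 3).const_mul j).add (ht.const_mul k)).add_const l
  refine h.congr_deriv ?_
  simp [g1']; ring

lemma hd_g1' (j k : ℝ) {L : ℝ → ℝ} {p x : ℝ} (hL : HasDerivAt L p x) :
    HasDerivAt (fun s => g1' j k (L s)) (g2' j k (L x) * p) x := by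
  have ht : HasDerivAt (fun s => Real.tanh (L s)) ((1 - Real.tanh (L x) ^ 2) * p) x :=
    (hasDerivAt_tanh' (L x)).comp x hL
  have h := (((ht.pow 2).const_mul (3 * j)).add_const k).mul ((ht.pow 2).const_sub 1)
  refine h.congr_deriv ?_
  norm_num [g2']
  ring

/-- The 6-parameter family
`H(x,ν,r) = j tanh³(w) + k tanh(w) + l` with `w = (a²/b) r + b ν + a x + e`
satisfies the hyperCR (dispersionless Hirota) equation
`H_x H_rr − H_r H_xr − H_xx + H_rν = 0`. -/
theorem tanh_family_solves_hyperCR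
    (a b e j k l : ℝ) (hb : b ≠ 0)
    (H : ℝ → ℝ → ℝ → ℝ)
    (hdef : ∀ x ν r, H x ν r =
      j * Real.tanh (a ^ 2 / b * r + b * ν + a * x + e) ^ 3
        + k * Real.tanh (a ^ 2 / b * r + b * ν + a * x + e) + l) :
    ∀ x ν r,
      deriv (fun x' : ℝ => H x' ν r) x
          * deriv (deriv (fun r' : ℝ => H x ν r')) r
        - deriv (fun r' : ℝ => H x ν r') r
            * deriv (fun x' : ℝ => deriv (fun r' : ℝ => H x' ν r') r) x
        - deriv (deriv (fun x' : ℝ => H x' ν r)) x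
        + deriv (fun r' : ℝ => deriv (fun ν' : ℝ => H x ν' r') ν) r = 0 := by
  intro x ν r
  set c : ℝ := a ^ 2 / b with hc
  -- linear inner functions
  have hwr : ∀ x' ν' r', HasDerivAt (fun s => c * s + b * ν' + a * x' + e) c r' := by
    intro x' ν' r'
    simpa using ((((hasDerivAt_id r').const_mul c).add_const (b * ν')).add_const (a * x')).add_const e
  have hwx : ∀ x' ν' r', HasDerivAt (fun s => c * r' + b * ν' + a * s + e) a x' := by
    intro x' ν' r'
    simpa using ((((hasDerivAt_id x').const_mul a).const_add (c * r' + b * ν')).add_const e)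
  have hwv : ∀ x' ν' r', HasDerivAt (fun s => c * r' + b * s + a * x' + e) b ν' := by
    intro x' ν' r'
    simpa using (((((hasDerivAt_id ν').const_mul b).const_add (c * r')).add_const (a * x')).add_const e)
  -- first derivatives
  have hHr : ∀ x' ν' r', deriv (fun s => H x' ν' s) r'
      = g1' j k (c * r' + b * ν' + a * x' + e) * c := by
    intro x' ν' r'
    have hfun : (fun s => H x' ν' s)
        = fun s => j * Real.tanh (c * s + b * ν' + a * x' + e) ^ 3
          + k * Real.tanh (c * s + b * ν' + a * x' + e) + l := funext fun s => hdef x' ν' s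
    rw [hfun]
    exact (hd_f' j k l (hwr x' ν' r')).deriv
  have hHx : ∀ x' ν' r', deriv (fun s => H s ν' r') x'
      = g1' j k (c * r' + b * ν' + a * x' + e) * a := by
    intro x' ν' r'
    have hfun : (fun s => H s ν' r')
        = fun s => j * Real.tanh (c * r' + b * ν' + a * s + e) ^ 3
          + k * Real.tanh (c * r' + b * ν' + a * s + e) + l := funext fun s => hdef s ν' r'
    rw [hfun]
    exact (hd_f' j k l (hwx x' ν' r')).deriv
  have hHv : ∀ x' ν' r', deriv (fun s => H x' s r') ν'
      = g1' j k (c * r' + b * ν' + a * x' + e) * b := by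
    intro x' ν' r'
    have hfun : (fun s => H x' s r')
        = fun s => j * Real.tanh (c * r' + b * s + a * x' + e) ^ 3
          + k * Real.tanh (c * r' + b * s + a * x' + e) + l := funext fun s => hdef x' s r'
    rw [hfun]
    exact (hd_f' j k l (hwv x' ν' r')).deriv
  -- second derivatives
  have hrr : deriv (deriv (fun r' : ℝ => H x ν r')) r
      = g2' j k (c * r + b * ν + a * x + e) * c * c := by
    have hfun : deriv (fun r' : ℝ => H x ν r')
        = fun s => g1' j k (c * s + b * ν + a * x + e) * c := funext fun s => hHr x ν s
    rw [hfun]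
    simpa [mul_assoc] using ((hd_g1' j k (hwr x ν r)).mul_const c).deriv
  have hxr : deriv (fun x' : ℝ => deriv (fun r' : ℝ => H x' ν r') r) x
      = g2' j k (c * r + b * ν + a * x + e) * a * c := by
    have hfun : (fun x' : ℝ => deriv (fun r' : ℝ => H x' ν r') r)
        = fun s => g1' j k (c * r + b * ν + a * s + e) * c := funext fun s => hHr s ν r
    rw [hfun]
    simpa [mul_assoc] using ((hd_g1' j k (hwx x ν r)).mul_const c).deriv
  have hxx : deriv (deriv (fun x' : ℝ => H x' ν r)) x
      = g2' j k (c * r + b * ν + a * x + e) * a * a := by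
    have hfun : deriv (fun x' : ℝ => H x' ν r)
        = fun s => g1' j k (c * r + b * ν + a * s + e) * a := funext fun s => hHx s ν r
    rw [hfun]
    simpa [mul_assoc] using ((hd_g1' j k (hwx x ν r)).mul_const a).deriv
  have hrv : deriv (fun r' : ℝ => deriv (fun ν' : ℝ => H x ν' r') ν) r
      = g2' j k (c * r + b * ν + a * x + e) * c * b := by
    have hfun : (fun r' : ℝ => deriv (fun ν' : ℝ => H x ν' r') ν)
        = fun s => g1' j k (c * s + b * ν + a * x + e) * b := funext fun s => hHv x ν s
    rw [hfun]
    simpa [mul_assoc] using ((hd_g1' j k (hwr x ν r)).mul_const b).deriv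
  rw [hrr, hxr, hxx, hrv, hHr x ν r, hHx x ν r, hc]
  field_simp
  ring
end

section
/- Fix a real constant c and let h : ℝ → ℝ be twice differentiable. Define H : ℝ³ → ℝ by H(x, ν, r) = c·h(x)·r². Then for all (x, ν, r), ∂x H·∂r∂r H − ∂r H·∂x∂r H − ∂x∂x H + ∂r∂ν H = −c·r²·( h''(x) + 2·c·h(x)·h'(x) ). In particular, for c ≠ 0, H satisfies the hyperCR equation H_x H_rr − H_r H_xr − H_xx + H_rν = 0 identically in (x, ν, r) if and only if h satisfies h'' = −2c·h·h' on ℝ. -/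
/-- For `H(x,ν,r) = c h(x) r²` with `h` twice differentiable, the
hyperCR expression equals `−c r² (h'' + 2 c h h')`; hence for `c ≠ 0`, `H` solves
the hyperCR equation identically iff `h'' = −2 c h h'` on `ℝ`. -/
theorem nearHorizon_hyperCR_reduction
    (c : ℝ) (h : ℝ → ℝ)
    (hd1 : Differentiable ℝ h)
    (hd2 : Differentiable ℝ (deriv h))
    (H : ℝ → ℝ → ℝ → ℝ)
    (hdef : ∀ x ν r, H x ν r = c * h x * r ^ 2) :
    (∀ x ν r : ℝ,
      deriv (fun x' : ℝ => H x' ν r) x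
          * deriv (deriv (fun r' : ℝ => H x ν r')) r
        - deriv (fun r' : ℝ => H x ν r') r
            * deriv (fun x' : ℝ => deriv (fun r' : ℝ => H x' ν r') r) x
        - deriv (deriv (fun x' : ℝ => H x' ν r)) x
        + deriv (fun r' : ℝ => deriv (fun ν' : ℝ => H x ν' r') ν) r
      = -c * r ^ 2 * (deriv (deriv h) x + 2 * c * h x * deriv h x)) ∧
    (c ≠ 0 →
      ((∀ x ν r : ℝ,
        deriv (fun x' : ℝ => H x' ν r) x
            * deriv (deriv (fun r' : ℝ => H x ν r')) r
          - deriv (fun r' : ℝ => H x ν r') r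
              * deriv (fun x' : ℝ => deriv (fun r' : ℝ => H x' ν r') r) x
          - deriv (deriv (fun x' : ℝ => H x' ν r)) x
          + deriv (fun r' : ℝ => deriv (fun ν' : ℝ => H x ν' r') ν) r = 0) ↔
        ∀ x : ℝ, deriv (deriv h) x = -2 * c * h x * deriv h x)) := by
  -- derivative of x' ↦ c * h x' * a  is  c * deriv h x * a
  have dX : ∀ (a x : ℝ), deriv (fun x' : ℝ => c * h x' * a) x
      = c * deriv h x * a := by
    intro a x
    have : (fun x' : ℝ => c * h x' * a) = fun x' : ℝ => (c * a) * h x' := by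
      funext x'; ring
    rw [this, deriv_const_mul _ (hd1 x)]; ring
  -- derivative of r' ↦ b * r'^2 is b * (2r)
  have dR : ∀ (b r : ℝ), deriv (fun r' : ℝ => b * r' ^ 2) r = b * (2 * r) := by
    intro b r
    rw [deriv_const_mul _ (by fun_prop : DifferentiableAt ℝ (fun r' : ℝ => r' ^ 2) r)]
    simp [deriv_pow]
  have key : ∀ x ν r : ℝ,
      deriv (fun x' : ℝ => H x' ν r) x
          * deriv (deriv (fun r' : ℝ => H x ν r')) r
        - deriv (fun r' : ℝ => H x ν r') r
            * deriv (fun x' : ℝ => deriv (fun r' : ℝ => H x' ν r') r) x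
        - deriv (deriv (fun x' : ℝ => H x' ν r)) x
        + deriv (fun r' : ℝ => deriv (fun ν' : ℝ => H x ν' r') ν) r
      = -c * r ^ 2 * (deriv (deriv h) x + 2 * c * h x * deriv h x) := by
    intro x ν r
    simp only [hdef]
    have e1 : deriv (fun x' : ℝ => c * h x' * r ^ 2) x = c * deriv h x * r ^ 2 := dX _ _
    have e2 : deriv (fun r' : ℝ => c * h x * r' ^ 2) r = c * h x * (2 * r) := dR _ _
    have e3 : deriv (deriv (fun r' : ℝ => c * h x * r' ^ 2)) r = c * h x * 2 := by
      have : deriv (fun r' : ℝ => c * h x * r' ^ 2) = fun r' : ℝ => c * h x * (2 * r') := by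
        funext r'; exact dR _ _
      rw [this]
      have : (fun r' : ℝ => c * h x * (2 * r')) = fun r' : ℝ => (c * h x * 2) * r' := by
        funext r'; ring
      rw [this, deriv_const_mul _ (differentiableAt_fun_id), deriv_id'']; ring
    have e4 : deriv (fun x' : ℝ => deriv (fun r' : ℝ => c * h x' * r' ^ 2) r) x
        = c * deriv h x * (2 * r) := by
      have : (fun x' : ℝ => deriv (fun r' : ℝ => c * h x' * r' ^ 2) r)
          = fun x' : ℝ => (c * (2 * r)) * h x' := by
        funext x'; rw [dR]; ring
      rw [this, deriv_const_mul _ (hd1 x)]; ring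
    have e5 : deriv (deriv (fun x' : ℝ => c * h x' * r ^ 2)) x
        = c * deriv (deriv h) x * r ^ 2 := by
      have : deriv (fun x' : ℝ => c * h x' * r ^ 2) = fun x' : ℝ => (c * r ^ 2) * deriv h x' := by
        funext x'; rw [dX]; ring
      rw [this, deriv_const_mul _ (hd2 x)]; ring
    have e6 : deriv (fun r' : ℝ => deriv (fun _ν' : ℝ => c * h x * r' ^ 2) ν) r = 0 := by
      simp [deriv_const]
    rw [e1, e2, e3, e4, e5, e6]; ring
  refine ⟨key, fun hc => ⟨fun heq x => ?_, fun hode x ν r => ?_⟩⟩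
  · have := (key x 0 1).symm.trans (heq x 0 1)
    have h1 : c * (deriv (deriv h) x + 2 * c * h x * deriv h x) = 0 := by
      nlinarith [this]
    rcases mul_eq_zero.mp h1 with h2 | h2
    · exact absurd h2 hc
    · nlinarith [h2]
  · rw [key]; rw [hode x]; ring
end
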